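/- Let φ : A⁺ → S and ψ : A⁺ → T be surjective semigroup homomorphisms and f : S → T a homomorphism with f ∘ φ = ψ. If u ≈_φ v (i.e., φ(u) = φ(v) and the paths of u and v in the two-sided Cayley graph of φ meet the same strongly connected components), then u ≈_ψ v. Hence there is a unique surjective homomorphism f^C : A⁺/≈_φ → A⁺/≈_ψ commuting with the quotient maps. -/

import Mathlib

variable {A S : Type*}

/-- Image of a word under the extension of `φ` to the free monoid, in `S¹ = WithOne S`. -/
def phiStar [Semigroup S] (φ : A → S) (w : List A) : WithOne S :=
  (w.map fun a => (φ a : WithOne S)).prod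

/-- `φ` induces a surjective homomorphism `A⁺ → S`. -/
def PlusSurj [Semigroup S] (φ : A → S) : Prop :=
  ∀ s : S, ∃ w : List A, w ≠ [] ∧ phiStar φ w = (s : WithOne S)

/-- An edge `((s₁,t₁), a, (s₂,t₂))` of the two-sided Cayley graph `Γ_φ`. -/
def IsEdge [Semigroup S] (φ : A → S)
    (e : (WithOne S × WithOne S) × A × (WithOne S × WithOne S)) : Prop :=
  e.1.1 * (φ e.2.1 : WithOne S) = e.2.2.1 ∧ e.1.2 = (φ e.2.1 : WithOne S) * e.2.2.2

/-- There is a path labeled `w` from `p` to `q` in `Γ_φ`. -/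
def HasPath [Semigroup S] (φ : A → S) (p q : WithOne S × WithOne S) (w : List A) : Prop :=
  p.1 * phiStar φ w = q.1 ∧ p.2 = phiStar φ w * q.2

/-- There is a (possibly empty) path from `p` to `q` in `Γ_φ`. -/
def Reach [Semigroup S] (φ : A → S) (p q : WithOne S × WithOne S) : Prop :=
  ∃ w : List A, HasPath φ p q w

/-- `p` and `q` lie in the same strongly connected component of `Γ_φ`. -/
def SameSCC [Semigroup S] (φ : A → S) (p q : WithOne S × WithOne S) : Prop :=
  Reach φ p q ∧ Reach φ q p

/-- `p` is a vertex of the canonical path `p_u` of the word `u` in `Γ_φ`. -/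
def OnPath [Semigroup S] (φ : A → S) (u : List A) (p : WithOne S × WithOne S) : Prop :=
  ∃ u₁ u₂ : List A, u = u₁ ++ u₂ ∧ p = (phiStar φ u₁, phiStar φ u₂)

/-- The paths `p_u` and `p_v` meet the same strongly connected components of `Γ_φ`,
i.e. `C(p_u) = C(p_v)`. -/
def SameComponents [Semigroup S] (φ : A → S) (u v : List A) : Prop :=
  (∀ p, OnPath φ u p → ∃ q, OnPath φ v q ∧ SameSCC φ p q) ∧
  (∀ q, OnPath φ v q → ∃ p, OnPath φ u p ∧ SameSCC φ p q)

/-- The two-sided connected congruence `u ≈_φ v`. -/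
def ConnCong [Semigroup S] (φ : A → S) (u v : List A) : Prop :=
  phiStar φ u = phiStar φ v ∧ SameComponents φ u v

/-- `e` is an edge traversed by the canonical path `p_u` in `Γ_φ`. -/
def EdgeOfPath [Semigroup S] (φ : A → S) (u : List A)
    (e : (WithOne S × WithOne S) × A × (WithOne S × WithOne S)) : Prop :=
  ∃ u₁ u₂ : List A, u = u₁ ++ e.2.1 :: u₂ ∧
    e.1 = (phiStar φ u₁, phiStar φ (e.2.1 :: u₂)) ∧
    e.2.2 = (phiStar φ (u₁ ++ [e.2.1]), phiStar φ u₂)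

/-- `e` is a transition edge traversed by `p_u`: an edge of `p_u` whose endpoints lie in
distinct strongly connected components of `Γ_φ`. -/
def IsTransitionOfPath [Semigroup S] (φ : A → S) (u : List A)
    (e : (WithOne S × WithOne S) × A × (WithOne S × WithOne S)) : Prop :=
  EdgeOfPath φ u e ∧ ¬ SameSCC φ e.1 e.2.2

/-- The two-sided Karnofsky–Rhodes congruence `u ≡_φ v`: same image under `φ` and same set
of transition edges. -/
def KRCong [Semigroup S] (φ : A → S) (u v : List A) : Prop :=
  phiStar φ u = phiStar φ v ∧
  ∀ e, IsTransitionOfPath φ u e ↔ IsTransitionOfPath φ v e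


section Aux
variable {A S : Type*}

lemma phiStar_map {T : Type*} [Semigroup S] [Semigroup T]
    (φ : A → S) (ψ : A → T) (f : S →ₙ* T) (hf : ∀ a : A, ψ a = f (φ a))
    (w : List A) : phiStar ψ w = WithOne.mapMulHom f (phiStar φ w) := by
  unfold phiStar
  rw [map_list_prod, List.map_map]
  congr 1
  ext a
  simp [WithOne.mapMulHom_coe, hf]

lemma reach_map {T : Type*} [Semigroup S] [Semigroup T]
    (φ : A → S) (ψ : A → T) (f : S →ₙ* T) (hf : ∀ a : A, ψ a = f (φ a))
    {p q : WithOne S × WithOne S} (h : Reach φ p q) :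
    Reach ψ (WithOne.mapMulHom f p.1, WithOne.mapMulHom f p.2)
      (WithOne.mapMulHom f q.1, WithOne.mapMulHom f q.2) := by
  obtain ⟨w, h1, h2⟩ := h
  exact ⟨w, by rw [phiStar_map φ ψ f hf, ← map_mul, h1],
    by rw [h2, phiStar_map φ ψ f hf, map_mul]⟩


end Aux

/-- If `f ∘ φ = ψ` then `u ≈_φ v` implies `u ≈_ψ v`; hence there is a unique surjective map
between the quotients commuting with the quotient maps. -/
theorem connCong_functorial {T : Type*} [Semigroup S] [Semigroup T]
    (φ : A → S) (ψ : A → T) (hφ : PlusSurj φ) (hψ : PlusSurj ψ)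
    (f : S →ₙ* T) (hf : ∀ a : A, ψ a = f (φ a)) :
    (∀ u v : List A, u ≠ [] → v ≠ [] → ConnCong φ u v → ConnCong ψ u v) ∧
    (∃! g : Quot (fun u v : {w : List A // w ≠ []} => ConnCong φ u.1 v.1) →
            Quot (fun u v : {w : List A // w ≠ []} => ConnCong ψ u.1 v.1),
      Function.Surjective g ∧ ∀ u : {w : List A // w ≠ []},
        g (Quot.mk _ u) = Quot.mk _ u) := by
  have main : ∀ u v : List A, u ≠ [] → v ≠ [] → ConnCong φ u v → ConnCong ψ u v := by
    intro u v _ _ h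
    obtain ⟨hφeq, hc1, hc2⟩ := h
    refine ⟨by rw [phiStar_map φ ψ f hf, phiStar_map φ ψ f hf, hφeq], ?_, ?_⟩
    · rintro p ⟨u₁, u₂, hsplit, hp⟩
      obtain ⟨q', ⟨v₁, v₂, hv', hq'⟩, hs1, hs2⟩ :=
        hc1 (phiStar φ u₁, phiStar φ u₂) ⟨u₁, u₂, hsplit, rfl⟩
      refine ⟨(phiStar ψ v₁, phiStar ψ v₂), ⟨v₁, v₂, hv', rfl⟩, ?_, ?_⟩
      · have := reach_map φ ψ f hf hs1
        rw [hq'] at this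
        simpa [hp, phiStar_map φ ψ f hf] using this
      · have := reach_map φ ψ f hf hs2
        rw [hq'] at this
        simpa [hp, phiStar_map φ ψ f hf] using this
    · rintro q ⟨v₁, v₂, hsplit, hq⟩
      obtain ⟨p', ⟨u₁, u₂, hu', hp'⟩, hs1, hs2⟩ :=
        hc2 (phiStar φ v₁, phiStar φ v₂) ⟨v₁, v₂, hsplit, rfl⟩
      refine ⟨(phiStar ψ u₁, phiStar ψ u₂), ⟨u₁, u₂, hu', rfl⟩, ?_, ?_⟩
      · have := reach_map φ ψ f hf hs1
        rw [hp'] at this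
        simpa [hq, phiStar_map φ ψ f hf] using this
      · have := reach_map φ ψ f hf hs2
        rw [hp'] at this
        simpa [hq, phiStar_map φ ψ f hf] using this
  refine ⟨main, ?_⟩
  refine ⟨Quot.lift (fun u => Quot.mk _ u)
    (fun a b hab => Quot.sound (main a.1 b.1 a.2 b.2 hab)), ⟨?_, fun u => rfl⟩, ?_⟩
  · intro x
    induction x using Quot.ind with
    | _ u => exact ⟨Quot.mk _ u, rfl⟩
  · rintro g' ⟨-, hg'⟩
    funext x
    induction x using Quot.ind with
    | _ u => exact (hg' u).trans rfl
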